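/- With the notation of the codimension-m pointwise algebra for a vector-valued second fundamental form (see context), let c₀ > 1/n, assume f := c₀‖H‖² − ‖A‖² ≠ 0, and set u := ‖Â‖²/f. Then the following identity holds: u·( c₀·|⟨A,H⟩|² − |⟨A,A⟩|² − |R⊥|² ) − |⟨Â,Â⟩|² − |R̂⊥|² − |R⊥(ν₁)|² = (1/(nc₀−1))·f·‖Â‖² + |ḣ·Â|² + (3/2)·‖Â‖⁴ + 2·‖ḣ‖²·‖Â‖² + (2u+1)·( 2‖ḣ‖²‖Â‖² − |ḣ·Â|² − |R⊥(ν₁)|² ) + (u+1)·( (3/2)‖Â‖⁴ − |⟨Â,Â⟩|² − |R̂⊥|² ) + (u+2)·( 1/(nc₀−1) − 3/2 )·‖Â‖⁴ + (u+1)·( nc₀/(nc₀−1) − 4 )·‖ḣ‖²·‖Â‖². -/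

import Mathlib

open Finset
open scoped RealInnerProductSpace


theorem keyF5 {ι : Type*} [Fintype ι] (ν W : ι → ℝ) (R : ι → ι → ℝ)
    (hν1 : ∑ α, ν α ^ 2 = 1) (hνW : ∑ α, ν α * W α = 0)
    (hRν : ∀ β, ∑ α, ν α * R α β = 0) (hRν' : ∀ α, ∑ β, R α β * ν β = 0) :
    ∑ α, ∑ β, (R α β + ν α * W β - ν β * W α) ^ 2
      = (∑ α, ∑ β, R α β ^ 2) + 2 * ∑ α, W α ^ 2 := by
  have e : ∀ α β, (R α β + ν α * W β - ν β * W α) ^ 2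
      = R α β ^ 2 + ν α ^ 2 * W β ^ 2 + ν β ^ 2 * W α ^ 2
        + (2 * (ν α * R α β)) * W β - (2 * (R α β * ν β)) * W α
        - (2 * (ν α * W α)) * (ν β * W β) := fun α β => by ring
  have SB1 : ∑ α, ∑ β, ν α ^ 2 * W β ^ 2 = ∑ α, W α ^ 2 := by
    simp only [← Finset.mul_sum]
    rw [← Finset.sum_mul, hν1, one_mul]
  have SB2 : ∑ α, ∑ β, ν β ^ 2 * W α ^ 2 = ∑ α, W α ^ 2 := by
    refine Finset.sum_congr rfl fun α _ => ?_
    rw [← Finset.sum_mul, hν1, one_mul]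
  have s1 : ∑ α, ∑ β, (2 * (ν α * R α β)) * W β = 0 := by
    rw [Finset.sum_comm]
    refine Finset.sum_eq_zero fun β _ => ?_
    rw [← Finset.sum_mul]
    have : ∑ α, 2 * (ν α * R α β) = 0 := by rw [← Finset.mul_sum, hRν β, mul_zero]
    rw [this, zero_mul]
  have s2 : ∑ α, ∑ β, (2 * (R α β * ν β)) * W α = 0 := by
    refine Finset.sum_eq_zero fun α _ => ?_
    rw [← Finset.sum_mul]
    have : ∑ β, 2 * (R α β * ν β) = 0 := by rw [← Finset.mul_sum, hRν' α, mul_zero]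
    rw [this, zero_mul]
  have s3 : ∑ α, ∑ β, (2 * (ν α * W α)) * (ν β * W β) = 0 := by
    refine Finset.sum_eq_zero fun α _ => ?_
    rw [← Finset.mul_sum, hνW, mul_zero]
  calc ∑ α, ∑ β, (R α β + ν α * W β - ν β * W α) ^ 2
      = ∑ α, ∑ β, (R α β ^ 2 + ν α ^ 2 * W β ^ 2 + ν β ^ 2 * W α ^ 2
        + (2 * (ν α * R α β)) * W β - (2 * (R α β * ν β)) * W α
        - (2 * (ν α * W α)) * (ν β * W β)) :=
        Finset.sum_congr rfl fun α _ => Finset.sum_congr rfl fun β _ => e α β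
    _ = (∑ α, ∑ β, R α β ^ 2) + (∑ α, ∑ β, ν α ^ 2 * W β ^ 2)
        + (∑ α, ∑ β, ν β ^ 2 * W α ^ 2)
        + (∑ α, ∑ β, (2 * (ν α * R α β)) * W β)
        - (∑ α, ∑ β, (2 * (R α β * ν β)) * W α)
        - (∑ α, ∑ β, (2 * (ν α * W α)) * (ν β * W β)) := by
        simp only [Finset.sum_add_distrib, Finset.sum_sub_distrib]
    _ = (∑ α, ∑ β, R α β ^ 2) + 2 * ∑ α, W α ^ 2 := by
        rw [SB1, SB2, s1, s2, s3]; ring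
theorem algKey (e c₀ Q h2 N D S Rh Rν f u : ℝ)
    (he : e ≠ 0) (hc : e * c₀ - 1 ≠ 0) (hf0 : f ≠ 0)
    (hf : f = c₀ * Q - ((h2 + Q / e) + N)) (hu : u = N / f) :
    u * (c₀ * (Q * (h2 + Q / e)) - ((h2 + Q / e)^2 + 2*D + S) - (Rh + 2*Rν)) - S - Rh - Rν
      = (1 / (e * c₀ - 1)) * f * N
        + D + (3 / 2) * N ^ 2 + 2 * h2 * N
        + (2 * u + 1) * (2 * h2 * N - D - Rν)
        + (u + 1) * ((3 / 2) * N ^ 2 - S - Rh)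
        + (u + 2) * (1 / (e * c₀ - 1) - 3 / 2) * N ^ 2
        + (u + 1) * (e * c₀ / (e * c₀ - 1) - 4) * h2 * N := by
  have hh2 : h2 = c₀ * Q - Q / e - N - f := by linarith
  subst hu hh2
  have hc' : c₀ * e - 1 ≠ 0 := by intro h; apply hc; linarith
  field_simp
  ring

/-- The reaction-term identity from Appendix B.2 of the paper, governing the
reaction terms in the evolution of `u = |Â|²/f` in the planarity estimate. -/
theorem stmt_13 (n m : ℕ) (hn : 2 ≤ n) (hm : 1 ≤ m)
    (c₀ : ℝ) (hc₀ : 1 / (n : ℝ) < c₀)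
    (A : Fin n → Fin n → EuclideanSpace ℝ (Fin m))
    (hA : ∀ i j, A i j = A j i)
    (H : EuclideanSpace ℝ (Fin m)) (hHdef : H = ∑ i, A i i) (hH0 : H ≠ 0)
    (ν : EuclideanSpace ℝ (Fin m)) (hν : ν = ‖H‖⁻¹ • H)
    (h : Fin n → Fin n → ℝ) (hh : ∀ i j, h i j = ⟪A i j, ν⟫)
    (h' : Fin n → Fin n → ℝ)
    (hh' : ∀ i j, h' i j = h i j - (‖H‖ / (n : ℝ)) * (if i = j then 1 else 0))
    (Ahat : Fin n → Fin n → EuclideanSpace ℝ (Fin m))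
    (hAhat : ∀ i j, Ahat i j = A i j - (h i j) • ν)
    (normA2 : ℝ) (hnormA2 : normA2 = ∑ i, ∑ j, ‖A i j‖ ^ 2)
    (normAhat2 : ℝ) (hnormAhat2 : normAhat2 = ∑ i, ∑ j, ‖Ahat i j‖ ^ 2)
    (normh'2 : ℝ) (hnormh'2 : normh'2 = ∑ i, ∑ j, (h' i j) ^ 2)
    (f : ℝ) (hf : f = c₀ * ‖H‖ ^ 2 - normA2) (hf0 : f ≠ 0)
    (u : ℝ) (hu : u = normAhat2 / f)
    (AH2 : ℝ) (hAH2 : AH2 = ∑ i, ∑ j, ⟪A i j, H⟫ ^ 2)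
    (AA2 : ℝ) (hAA2 : AA2 = ∑ i, ∑ j, ∑ p, ∑ q, ⟪A i j, A p q⟫ ^ 2)
    (AhatAhat2 : ℝ)
    (hAhatAhat2 : AhatAhat2 = ∑ i, ∑ j, ∑ p, ∑ q, ⟪Ahat i j, Ahat p q⟫ ^ 2)
    (Rperp2 : ℝ)
    (hRperp2 : Rperp2 = ∑ i, ∑ j, ∑ α, ∑ β,
      (∑ k, (A i k α * A j k β - A j k α * A i k β)) ^ 2)
    (Rhatperp2 : ℝ)
    (hRhatperp2 : Rhatperp2 = ∑ i, ∑ j, ∑ α, ∑ β,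
      (∑ k, (Ahat i k α * Ahat j k β - Ahat j k α * Ahat i k β)) ^ 2)
    (Rperpν2 : ℝ)
    (hRperpν2 : Rperpν2 = ∑ i, ∑ j,
      ‖∑ k, ((h' i k) • (Ahat j k) - (h' j k) • (Ahat i k))‖ ^ 2)
    (hdotAhat2 : ℝ)
    (hhdotAhat2 : hdotAhat2 = ‖∑ i, ∑ j, (h' i j) • (Ahat i j)‖ ^ 2) :
    u * (c₀ * AH2 - AA2 - Rperp2) - AhatAhat2 - Rhatperp2 - Rperpν2
      = (1 / ((n : ℝ) * c₀ - 1)) * f * normAhat2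
        + hdotAhat2
        + (3 / 2) * normAhat2 ^ 2
        + 2 * normh'2 * normAhat2
        + (2 * u + 1) * (2 * normh'2 * normAhat2 - hdotAhat2 - Rperpν2)
        + (u + 1) * ((3 / 2) * normAhat2 ^ 2 - AhatAhat2 - Rhatperp2)
        + (u + 2) * (1 / ((n : ℝ) * c₀ - 1) - 3 / 2) * normAhat2 ^ 2
        + (u + 1) * ((n : ℝ) * c₀ / ((n : ℝ) * c₀ - 1) - 4) * normh'2 * normAhat2 := by
  have hn0 : (n : ℝ) ≠ 0 := Nat.cast_ne_zero.mpr (by omega)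
  have hnpos : (0 : ℝ) < n := by positivity
  have hc : (n : ℝ) * c₀ - 1 ≠ 0 := by
    have h1 : 1 / (n : ℝ) * n < c₀ * n := mul_lt_mul_of_pos_right hc₀ hnpos
    rw [one_div_mul_cancel hn0] at h1
    nlinarith
  have hHn : ‖H‖ ≠ 0 := norm_ne_zero_iff.mpr hH0
  have hνν : ⟪ν, ν⟫ = (1 : ℝ) := by
    rw [hν, real_inner_smul_left, real_inner_smul_right, real_inner_self_eq_norm_sq]
    field_simp
  have hHsmul : H = ‖H‖ • ν := by
    rw [hν, smul_smul, mul_inv_cancel₀ hHn, one_smul]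
  have hAν : ∀ i j, ⟪A i j, ν⟫ = h i j := fun i j => (hh i j).symm
  have hAhn : ∀ i j, ⟪Ahat i j, ν⟫ = 0 := by
    intro i j
    rw [hAhat, inner_sub_left, real_inner_smul_left, hνν, hAν]; ring
  have hnuAh : ∀ i j, ⟪ν, Ahat i j⟫ = 0 := fun i j => by
    rw [real_inner_comm]; exact hAhn i j
  have hsymh : ∀ i j, h i j = h j i := fun i j => by rw [hh, hh, hA]
  have hsymAh : ∀ i j, Ahat i j = Ahat j i := fun i j => by
    rw [hAhat, hAhat, hA, hsymh]
  have hAdec : ∀ i j, A i j = Ahat i j + h i j • ν := by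
    intro i j; rw [hAhat]; abel
  have htr : ∑ i, h i i = ‖H‖ := by
    have e : ∑ i, h i i = ⟪H, ν⟫ := by
      rw [hHdef, sum_inner]
      exact (Finset.sum_congr rfl fun i _ => (hh i i).symm).symm
    rw [e, hν, real_inner_smul_right, real_inner_self_eq_norm_sq]
    field_simp
  have htrA : ∑ i, Ahat i i = (0 : EuclideanSpace ℝ (Fin m)) := by
    have e : ∑ i, Ahat i i = (∑ i, A i i) - (∑ i, h i i) • ν := by
      simp only [hAhat]
      rw [Finset.sum_sub_distrib, Finset.sum_smul]
    rw [e, ← hHdef, htr, ← hHsmul, sub_self]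
  have htrh' : ∑ i, h' i i = 0 := by
    have e : ∀ i : Fin n, h' i i = h i i - ‖H‖ / n := by intro i; rw [hh']; simp
    simp only [e]
    rw [Finset.sum_sub_distrib, htr, Finset.sum_const, Finset.card_univ,
      Fintype.card_fin, nsmul_eq_mul]
    field_simp
    ring
  have hAH : ∀ i j, ⟪A i j, H⟫ = ‖H‖ * h i j := by
    intro i j
    conv_lhs => rw [hHsmul]
    rw [real_inner_smul_right, hAν]
  have F1 : AH2 = ‖H‖ ^ 2 * (∑ i, ∑ j, h i j ^ 2) := by
    rw [hAH2]
    simp only [hAH, mul_pow, ← Finset.mul_sum]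
  have hnormAij : ∀ i j, ‖A i j‖ ^ 2 = h i j ^ 2 + ‖Ahat i j‖ ^ 2 := by
    intro i j
    rw [hAdec i j, ← real_inner_self_eq_norm_sq, ← real_inner_self_eq_norm_sq,
      real_inner_add_add_self, real_inner_smul_right, hAhn,
      real_inner_smul_left, real_inner_smul_right, hνν]
    ring
  have F2 : normA2 = (∑ i, ∑ j, h i j ^ 2) + normAhat2 := by
    rw [hnormA2, hnormAhat2]
    simp only [hnormAij, Finset.sum_add_distrib]
  have F3 : (∑ i, ∑ j, h i j ^ 2) = normh'2 + ‖H‖ ^ 2 / (n : ℝ) := by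
    have row : ∀ i : Fin n, ∑ j, h i j ^ 2
        = (∑ j, h' i j ^ 2) + (2 * (‖H‖ / n) * h' i i + (‖H‖ / n) ^ 2) := by
      intro i
      have e : ∀ j, h i j ^ 2 = h' i j ^ 2
          + (2 * (‖H‖ / n)) * (if i = j then h' i j else 0)
          + (‖H‖ / n) ^ 2 * (if i = j then 1 else 0) := by
        intro j
        rw [hh' i j]
        by_cases hij : i = j <;> simp [hij] <;> ring
      simp only [e, Finset.sum_add_distrib, ← Finset.mul_sum]
      rw [Finset.sum_ite_eq, Finset.sum_ite_eq]
      simp only [Finset.mem_univ, if_true]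
      ring
    simp only [row, Finset.sum_add_distrib]
    rw [← hnormh'2, ← Finset.mul_sum, htrh', Finset.sum_const, Finset.card_univ,
      Fintype.card_fin, nsmul_eq_mul]
    field_simp
    ring
  have hinnA : ∀ i j p q, ⟪A i j, A p q⟫ = h i j * h p q + ⟪Ahat i j, Ahat p q⟫ := by
    intro i j p q
    rw [hAdec i j, hAdec p q]
    simp only [inner_add_left, inner_add_right, real_inner_smul_left,
      real_inner_smul_right, hAhn, hnuAh, hνν]
    ring
  have hW0 : ∑ i, ∑ j, h i j • Ahat i j = ∑ i, ∑ j, h' i j • Ahat i j := by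
    have e : ∀ i j : Fin n, h i j • Ahat i j
        = h' i j • Ahat i j + (‖H‖ / n) • (if i = j then Ahat i j else 0) := by
      intro i j
      have e2 : h i j = h' i j + ‖H‖ / n * (if i = j then 1 else 0) := by
        rw [hh' i j]; ring
      rw [e2, add_smul]
      by_cases hij : i = j <;> simp [hij]
    simp only [e, Finset.sum_add_distrib, ← Finset.smul_sum]
    have z : ∑ i : Fin n, ∑ j, (if i = j then Ahat i j else 0) = 0 := by
      simp only [Finset.sum_ite_eq, Finset.mem_univ, if_true]
      exact htrA
    rw [z, smul_zero, add_zero]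
  have hVV : ∑ i, ∑ j, ∑ p, ∑ q, h i j * h p q * ⟪Ahat i j, Ahat p q⟫ = hdotAhat2 := by
    have e : ⟪∑ i, ∑ j, h i j • Ahat i j, ∑ p, ∑ q, h p q • Ahat p q⟫
        = ∑ i, ∑ j, ∑ p, ∑ q, h i j * h p q * ⟪Ahat i j, Ahat p q⟫ := by
      rw [sum_inner]
      refine Finset.sum_congr rfl fun i _ => ?_
      rw [sum_inner]
      refine Finset.sum_congr rfl fun j _ => ?_
      rw [real_inner_smul_left, inner_sum, Finset.mul_sum]
      refine Finset.sum_congr rfl fun p _ => ?_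
      rw [inner_sum, Finset.mul_sum]
      refine Finset.sum_congr rfl fun q _ => ?_
      rw [real_inner_smul_right]
      ring
    rw [← e, hW0, hhdotAhat2, real_inner_self_eq_norm_sq]
  have F4 : AA2 = (∑ i, ∑ j, h i j ^ 2) ^ 2 + 2 * hdotAhat2 + AhatAhat2 := by
    rw [hAA2]
    have e : ∀ i j p q : Fin n, ⟪A i j, A p q⟫ ^ 2
        = h i j ^ 2 * h p q ^ 2 + 2 * (h i j * h p q * ⟪Ahat i j, Ahat p q⟫)
          + ⟪Ahat i j, Ahat p q⟫ ^ 2 := by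
      intro i j p q; rw [hinnA]; ring
    simp only [e, Finset.sum_add_distrib]
    rw [← hAhatAhat2]
    congr 1
    congr 1
    · have e1 : ∀ i j : Fin n, ∑ p, ∑ q, h i j ^ 2 * h p q ^ 2
          = h i j ^ 2 * ∑ p, ∑ q, h p q ^ 2 := by
        intro i j; simp only [← Finset.mul_sum]
      simp only [e1, ← Finset.sum_mul]
      rw [sq]
    · simp only [← Finset.mul_sum]
      rw [hVV]
  have hinnc : ∀ (x y : EuclideanSpace ℝ (Fin m)), ⟪x, y⟫ = ∑ γ, x γ * y γ := by
    intro x y; rw [PiLp.inner_apply]; norm_num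
    exact Finset.sum_congr rfl fun _ _ => mul_comm _ _
  have hAcoord : ∀ i k (α : Fin m), A i k α = Ahat i k α + h i k * ν α := by
    intro i k α
    have e : Ahat i k α = A i k α - h i k * ν α := by
      rw [hAhat]
      simp [PiLp.sub_apply, PiLp.smul_apply]
    rw [e]; ring
  have hν1 : ∑ α, ν α ^ 2 = 1 := by
    have e := hinnc ν ν
    rw [hνν] at e
    simp only [pow_two]
    exact e.symm
  have hsum0 : ∀ p q, ∑ α, ν α * Ahat p q α = 0 := by
    intro p q; rw [← hinnc ν (Ahat p q)]; exact hnuAh p q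
  have F5 : Rperp2 = Rhatperp2 + 2 * Rperpν2 := by
    rw [hRperp2, hRhatperp2, hRperpν2]
    have main : ∀ i j : Fin n,
        ∑ α, ∑ β, (∑ k, (A i k α * A j k β - A j k α * A i k β)) ^ 2
        = (∑ α, ∑ β, (∑ k, (Ahat i k α * Ahat j k β - Ahat j k α * Ahat i k β)) ^ 2)
          + 2 * ‖∑ k, (h' i k • Ahat j k - h' j k • Ahat i k)‖ ^ 2 := by
      intro i j
      set W := ∑ k, (h' i k • Ahat j k - h' j k • Ahat i k) with hW
      have hWc : ∀ γ, W γ = ∑ k, (h' i k * Ahat j k γ - h' j k * Ahat i k γ) := by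
        intro γ
        rw [hW, WithLp.ofLp_sum, Finset.sum_apply]
        refine Finset.sum_congr rfl fun k _ => ?_
        simp [PiLp.sub_apply, PiLp.smul_apply]
      have hB : ∀ γ, ∑ k, (h i k * Ahat j k γ - h j k * Ahat i k γ) = W γ := by
        intro γ
        rw [hWc γ]
        have e2 : ∀ k, h i k * Ahat j k γ - h j k * Ahat i k γ
            = (h' i k * Ahat j k γ - h' j k * Ahat i k γ)
              + (‖H‖ / n) * ((if i = k then Ahat j k γ else 0)
                - (if j = k then Ahat i k γ else 0)) := by
          intro k
          have g1 : h i k = h' i k + ‖H‖ / n * (if i = k then 1 else 0) := by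
            rw [hh']; ring
          have g2 : h j k = h' j k + ‖H‖ / n * (if j = k then 1 else 0) := by
            rw [hh']; ring
          rw [g1, g2]
          by_cases h1 : i = k <;> by_cases h2 : j = k <;> simp [h1, h2] <;> ring
        have zsum : ∑ k : Fin n, ((if i = k then Ahat j k γ else 0)
            - (if j = k then Ahat i k γ else 0)) = 0 := by
          rw [Finset.sum_sub_distrib, Finset.sum_ite_eq, Finset.sum_ite_eq]
          simp only [Finset.mem_univ, if_true]
          rw [hsymAh j i]; ring
        calc ∑ k, (h i k * Ahat j k γ - h j k * Ahat i k γ)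
            = ∑ k, ((h' i k * Ahat j k γ - h' j k * Ahat i k γ)
              + (‖H‖ / n) * ((if i = k then Ahat j k γ else 0)
                - (if j = k then Ahat i k γ else 0))) :=
              Finset.sum_congr rfl fun k _ => e2 k
          _ = (∑ k, (h' i k * Ahat j k γ - h' j k * Ahat i k γ))
              + ∑ k, (‖H‖ / n) * ((if i = k then Ahat j k γ else 0)
                - (if j = k then Ahat i k γ else 0)) := Finset.sum_add_distrib
          _ = ∑ k, (h' i k * Ahat j k γ - h' j k * Ahat i k γ) := by
              rw [← Finset.mul_sum, zsum, mul_zero, add_zero]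
      have ha : ∀ α β : Fin m, ∑ k, (A i k α * A j k β - A j k α * A i k β)
          = (∑ k, (Ahat i k α * Ahat j k β - Ahat j k α * Ahat i k β))
            + ν α * W β - ν β * W α := by
        intro α β
        have e : ∀ k, A i k α * A j k β - A j k α * A i k β
            = (Ahat i k α * Ahat j k β - Ahat j k α * Ahat i k β)
              + ν α * (h i k * Ahat j k β - h j k * Ahat i k β)
              - ν β * (h i k * Ahat j k α - h j k * Ahat i k α) := by
          intro k
          rw [hAcoord i k α, hAcoord j k β, hAcoord j k α, hAcoord i k β]
          ring
        calc ∑ k, (A i k α * A j k β - A j k α * A i k β)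
            = ∑ k, ((Ahat i k α * Ahat j k β - Ahat j k α * Ahat i k β)
              + (ν α * (h i k * Ahat j k β - h j k * Ahat i k β)
                - ν β * (h i k * Ahat j k α - h j k * Ahat i k α))) :=
              Finset.sum_congr rfl fun k _ => by rw [e k]; ring
          _ = (∑ k, (Ahat i k α * Ahat j k β - Ahat j k α * Ahat i k β))
              + ∑ k, (ν α * (h i k * Ahat j k β - h j k * Ahat i k β)
                - ν β * (h i k * Ahat j k α - h j k * Ahat i k α)) := Finset.sum_add_distrib
          _ = (∑ k, (Ahat i k α * Ahat j k β - Ahat j k α * Ahat i k β))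
              + (ν α * W β - ν β * W α) := by
              congr 1
              rw [Finset.sum_sub_distrib, ← Finset.mul_sum, ← Finset.mul_sum, hB α, hB β]
          _ = (∑ k, (Ahat i k α * Ahat j k β - Ahat j k α * Ahat i k β))
              + ν α * W β - ν β * W α := by ring
      have hνW : ∑ α, ν α * W α = 0 := by
        rw [← hinnc ν W]
        rw [hW, inner_sum]
        refine Finset.sum_eq_zero fun k _ => ?_
        rw [inner_sub_right, real_inner_smul_right, real_inner_smul_right,
          hnuAh, hnuAh]
        ring
      have hRν : ∀ β, ∑ α, ν α *
          (∑ k, (Ahat i k α * Ahat j k β - Ahat j k α * Ahat i k β)) = 0 := by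
        intro β
        have e : ∀ α, ν α * (∑ k, (Ahat i k α * Ahat j k β - Ahat j k α * Ahat i k β))
            = ∑ k, ((ν α * Ahat i k α) * Ahat j k β - (ν α * Ahat j k α) * Ahat i k β) := by
          intro α
          rw [Finset.mul_sum]
          exact Finset.sum_congr rfl fun k _ => by ring
        simp only [e]
        rw [Finset.sum_comm]
        refine Finset.sum_eq_zero fun k _ => ?_
        rw [Finset.sum_sub_distrib, ← Finset.sum_mul, ← Finset.sum_mul, hsum0, hsum0]
        simp
      have hRν' : ∀ α, ∑ β,
          (∑ k, (Ahat i k α * Ahat j k β - Ahat j k α * Ahat i k β)) * ν β = 0 := by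
        intro α
        have e : ∀ β, (∑ k, (Ahat i k α * Ahat j k β - Ahat j k α * Ahat i k β)) * ν β
            = ∑ k, ((ν β * Ahat j k β) * Ahat i k α - (ν β * Ahat i k β) * Ahat j k α) := by
          intro β
          rw [Finset.sum_mul]
          exact Finset.sum_congr rfl fun k _ => by ring
        simp only [e]
        rw [Finset.sum_comm]
        refine Finset.sum_eq_zero fun k _ => ?_
        rw [Finset.sum_sub_distrib, ← Finset.sum_mul, ← Finset.sum_mul, hsum0, hsum0]
        simp
      have hWnorm : ‖W‖ ^ 2 = ∑ α, W α ^ 2 := by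
        rw [← real_inner_self_eq_norm_sq, hinnc]
        simp only [pow_two]
      calc ∑ α, ∑ β, (∑ k, (A i k α * A j k β - A j k α * A i k β)) ^ 2
          = ∑ α, ∑ β, ((∑ k, (Ahat i k α * Ahat j k β - Ahat j k α * Ahat i k β))
            + ν α * W β - ν β * W α) ^ 2 :=
            Finset.sum_congr rfl fun α _ => Finset.sum_congr rfl fun β _ => by rw [ha α β]
        _ = (∑ α, ∑ β, (∑ k, (Ahat i k α * Ahat j k β - Ahat j k α * Ahat i k β)) ^ 2)
            + 2 * ∑ α, W α ^ 2 :=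
            keyF5 (fun γ => ν γ) (fun γ => W γ)
              (fun α β => ∑ k, (Ahat i k α * Ahat j k β - Ahat j k α * Ahat i k β))
              hν1 hνW hRν hRν'
        _ = (∑ α, ∑ β, (∑ k, (Ahat i k α * Ahat j k β - Ahat j k α * Ahat i k β)) ^ 2)
            + 2 * ‖W‖ ^ 2 := by rw [hWnorm]
    simp only [main, Finset.sum_add_distrib, ← Finset.mul_sum]
  have F1' : AH2 = ‖H‖ ^ 2 * (normh'2 + ‖H‖ ^ 2 / (n : ℝ)) := by rw [F1, F3]
  have F4' : AA2 = (normh'2 + ‖H‖ ^ 2 / (n : ℝ)) ^ 2 + 2 * hdotAhat2 + AhatAhat2 := by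
    rw [F4, F3]
  have hf' : f = c₀ * ‖H‖ ^ 2 - ((normh'2 + ‖H‖ ^ 2 / (n : ℝ)) + normAhat2) := by
    rw [hf, F2, F3]
  rw [F1', F4', F5]
  exact algKey (n : ℝ) c₀ (‖H‖ ^ 2) normh'2 normAhat2 hdotAhat2 AhatAhat2
    Rhatperp2 Rperpν2 f u hn0 hc hf0 hf' hu
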